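/- For two qubit density matrices ρ = ½(𝟙 + x⃗·σ⃗) and σ = ½(𝟙 + y⃗·σ⃗) with Bloch vectors x⃗, y⃗ ∈ ℝ³, |x⃗| < 1, |y⃗| ≤ 1, the rate function satisfies Î(ρ,σ) = −S(σ) − |y⃗| ln[(1 + |x⃗| cos θ)/2] − ((1 − |y⃗|)/2) ln[(1 − |x⃗|²)/4], where θ is the angle between x⃗ and y⃗ (with x⃗·y⃗ = |x⃗||y⃗|cos θ) and S(σ) is the von Neumann entropy of σ. -/

import Mathlib

open Matrix ComplexOrder Real

/-- The upper-left `k × k` principal minor of a `d × d` matrix (for `k ≤ d`;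
defined via `min k d` so that no side condition is needed). -/
def pm {d : ℕ} (k : ℕ) (A : Matrix (Fin d) (Fin d) ℂ) : ℂ :=
  (A.submatrix (fun i : Fin (min k d) => Fin.castLE (min_le_right k d) i)
    (fun i : Fin (min k d) => Fin.castLE (min_le_right k d) i)).det

/-- The Pauli matrices σ₁, σ₂, σ₃. -/
def pauli : Fin 3 → Matrix (Fin 2) (Fin 2) ℂ :=
  ![!![0, 1; 1, 0], !![0, -Complex.I; Complex.I, 0], !![1, 0; 0, -1]]

/-- The qubit density matrix with Bloch vector `v`: `½(𝟙 + v⃗·σ⃗)`. -/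
noncomputable def bloch (v : EuclideanSpace ℝ (Fin 3)) : Matrix (Fin 2) (Fin 2) ℂ :=
  (1 / 2 : ℂ) • (1 + ∑ i : Fin 3, (v i : ℂ) • pauli i)

lemma pm_one (A : Matrix (Fin 2) (Fin 2) ℂ) : pm 1 A = A 0 0 := by
  rw [pm, Matrix.det_fin_one]; rfl

lemma pm_two (A : Matrix (Fin 2) (Fin 2) ℂ) : pm 2 A = A.det := by
  rw [pm, Matrix.det_fin_two, Matrix.det_fin_two]; simp

lemma bloch_eq (v : EuclideanSpace ℝ (Fin 3)) :
    bloch v = !![((1 + (v 2 : ℂ))/2), (((v 0 : ℂ) - (v 1 : ℂ)*Complex.I)/2);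
                  (((v 0 : ℂ) + (v 1 : ℂ)*Complex.I)/2), ((1 - (v 2 : ℂ))/2)] := by
  ext i j
  fin_cases i <;> fin_cases j <;>
    simp [bloch, pauli, Fin.sum_univ_three, Matrix.one_apply] <;> ring

lemma norm_sq_eq (x : EuclideanSpace ℝ (Fin 3)) : ‖x‖^2 = ∑ i, x i ^ 2 := by
  rw [EuclideanSpace.norm_eq, Real.sq_sqrt (by positivity)]
  simp [sq_abs]

lemma conj_trace (A B U : Matrix (Fin 2) (Fin 2) ℂ) (h : U * Uᴴ = 1) :
    ((Uᴴ * A * U) * (Uᴴ * B * U)).trace = (A * B).trace := by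
  have e : (Uᴴ * A * U) * (Uᴴ * B * U) = Uᴴ * (A * B) * U := by
    have h2 : U * (Uᴴ * B * U) = B * U := by
      rw [← Matrix.mul_assoc, ← Matrix.mul_assoc, h, Matrix.one_mul]
    rw [Matrix.mul_assoc (Uᴴ * A), h2, ← Matrix.mul_assoc, Matrix.mul_assoc Uᴴ A B]
  rw [e, Matrix.trace_mul_cycle, ← Matrix.mul_assoc, h, Matrix.one_mul]

lemma conj_trace' (A U : Matrix (Fin 2) (Fin 2) ℂ) (h : U * Uᴴ = 1) :
    (Uᴴ * A * U).trace = A.trace := by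
  rw [Matrix.trace_mul_cycle, h, Matrix.one_mul]

/-- for qubit states `ρ, σ` with Bloch vectors `x⃗, y⃗` (`|x⃗| < 1`, `|y⃗| ≤ 1`),
writing `σ = U ρ_x Uᴴ` with `x = ((1+|y⃗|)/2, (1−|y⃗|)/2)` the ordered spectrum of `σ` and
`U` unitary, the rate function `Î(ρ,σ)` (expressed through the principal minors of `Uᴴ ρ U`)
equals `−S(σ) − |y⃗| ln[(1+|x⃗| cos θ)/2] − ((1−|y⃗|)/2) ln[(1−|x⃗|²)/4]`, where
`θ` is the angle between the Bloch vectors and `S(σ) = −∑ x_k ln x_k` is the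
von Neumann entropy of `σ`. -/
theorem qubit_rate_function_formula
    (xv yv : EuclideanSpace ℝ (Fin 3)) (hx : ‖xv‖ < 1) (hy : ‖yv‖ ≤ 1)
    (θ : ℝ) (hθ : ∑ i : Fin 3, xv i * yv i = ‖xv‖ * ‖yv‖ * Real.cos θ)
    (U : Matrix (Fin 2) (Fin 2) ℂ) (hU : U ∈ Matrix.unitaryGroup (Fin 2) ℂ)
    (hσ : bloch yv
        = U * Matrix.diagonal ![(((1 + ‖yv‖) / 2 : ℝ) : ℂ), (((1 - ‖yv‖) / 2 : ℝ) : ℂ)] * Uᴴ) :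
    (1 + ‖yv‖) / 2 * Real.log ((1 + ‖yv‖) / 2)
      + (1 - ‖yv‖) / 2 * Real.log ((1 - ‖yv‖) / 2)
      - ((1 + ‖yv‖) / 2 - (1 - ‖yv‖) / 2) * Real.log ((pm 1 (Uᴴ * bloch xv * U)).re)
      - (1 - ‖yv‖) / 2 * Real.log ((pm 2 (Uᴴ * bloch xv * U)).re)
    = -(-((1 + ‖yv‖) / 2 * Real.log ((1 + ‖yv‖) / 2)
          + (1 - ‖yv‖) / 2 * Real.log ((1 - ‖yv‖) / 2)))
      - ‖yv‖ * Real.log ((1 + ‖xv‖ * Real.cos θ) / 2)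
      - (1 - ‖yv‖) / 2 * Real.log ((1 - ‖xv‖ ^ 2) / 4) := by
  have hUU : Uᴴ * U = 1 := by simpa [Matrix.star_eq_conjTranspose] using hU.1
  have hUU' : U * Uᴴ = 1 := by simpa [Matrix.star_eq_conjTranspose] using hU.2
  set n := ‖yv‖ with hn
  set s := ∑ i : Fin 3, xv i * yv i with hs
  set D : Matrix (Fin 2) (Fin 2) ℂ :=
    Matrix.diagonal ![(((1 + n) / 2 : ℝ) : ℂ), (((1 - n) / 2 : ℝ) : ℂ)] with hD
  set M := Uᴴ * bloch xv * U with hM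
  -- N = D
  have hN : Uᴴ * bloch yv * U = D := by
    rw [hσ]
    calc Uᴴ * (U * D * Uᴴ) * U = (Uᴴ * U) * D * (Uᴴ * U) := by
          rw [Matrix.mul_assoc Uᴴ U D, ← Matrix.mul_assoc, ← Matrix.mul_assoc,
            Matrix.mul_assoc (Uᴴ * U * D) Uᴴ U]
      _ = D := by rw [hUU, Matrix.one_mul, Matrix.mul_one]
  -- trace of ρx and ρx σy
  have htr : (bloch xv).trace = 1 := by
    rw [bloch_eq, Matrix.trace_fin_two]
    simp; ring
  have htrM : M.trace = 1 := by rw [hM, conj_trace' _ _ hUU', htr]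
  have htrMN : (M * (Uᴴ * bloch yv * U)).trace = (((1 + s)/2 : ℝ) : ℂ) := by
    rw [hM, conj_trace _ _ _ hUU', bloch_eq, bloch_eq, Matrix.trace_fin_two]
    simp [Matrix.mul_apply, Fin.sum_univ_two, hs, Fin.sum_univ_three]
    push_cast
    ring_nf
    simp [Complex.I_sq]
    ring
  -- M00 equation
  have hM00 : (n : ℂ) * M 0 0 = (((s + n)/2 : ℝ) : ℂ) := by
    have h1 : (M * D).trace = M 0 0 * (((1 + n) / 2 : ℝ) : ℂ) + M 1 1 * (((1 - n) / 2 : ℝ) : ℂ) := by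
      rw [Matrix.trace_fin_two]
      simp [hD, Matrix.mul_apply, Fin.sum_univ_two, Matrix.diagonal]
    have h2 : M 0 0 + M 1 1 = 1 := by rw [← htrM, Matrix.trace_fin_two]
    have h3 : M 1 1 = 1 - M 0 0 := by linear_combination h2
    rw [hN] at htrMN
    rw [h1, h3] at htrMN
    push_cast at htrMN ⊢
    linear_combination htrMN
  -- pm 2 value
  have hdet : (pm 2 M).re = (1 - ‖xv‖^2)/4 := by
    have : pm 2 M = (((1 - ‖xv‖^2)/4 : ℝ) : ℂ) := by
      rw [pm_two, hM, Matrix.det_mul, Matrix.det_mul]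
      have : Uᴴ.det * (bloch xv).det * U.det = (Uᴴ * U).det * (bloch xv).det := by
        rw [Matrix.det_mul]; ring
      rw [this, hUU, Matrix.det_one, one_mul, bloch_eq, Matrix.det_fin_two_of]
      rw [norm_sq_eq, Fin.sum_univ_three]
      push_cast
      linear_combination ((xv 1 : ℂ)^2 / 4) * Complex.I_sq
    rw [this, Complex.ofReal_re]
  -- pm 1 log equation
  have hlog1 : n * Real.log ((pm 1 M).re) = n * Real.log ((1 + ‖xv‖ * Real.cos θ) / 2) := by
    rcases eq_or_ne n 0 with h0 | h0
    · rw [h0, zero_mul, zero_mul]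
    · have hx1 : M 0 0 = (((s + n)/(2*n) : ℝ) : ℂ) := by
        have hne : (n : ℂ) ≠ 0 := by exact_mod_cast h0
        push_cast at hM00 ⊢
        rw [eq_div_iff (mul_ne_zero two_ne_zero hne)]
        linear_combination 2 * hM00
      have : (pm 1 M).re = (s + n)/(2*n) := by
        rw [pm_one, hx1, Complex.ofReal_re]
      rw [this]
      congr 1
      have : ‖xv‖ * Real.cos θ = s / n := by
        rw [hθ]; field_simp
      rw [this]
      field_simp
      ring
  -- final arithmetic
  have hcoef : (1 + n) / 2 - (1 - n) / 2 = n := by ring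
  rw [hcoef, hdet, hlog1]
  ring
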